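/- Let ℓ(W) = (1/2)‖W − Λ‖_F² + c for a fixed matrix Λ ∈ ℝ^{dₙ×d₀} and constant c. Then W has deficiency margin δ > 0 (i.e., ℓ(W) < ℓ(W') for every W' with σ_min(W') ≤ δ) if and only if ‖W − Λ‖_F < σ_min(Λ) − δ. -/

import Mathlib

open Matrix

/-- The Frobenius norm of a real matrix. -/
noncomputable def frobNorm {p q : ℕ} (M : Matrix (Fin p) (Fin q) ℝ) : ℝ :=
  Real.sqrt (∑ i, ∑ j, (M i j) ^ 2)

/-- The smallest singular value of a rectangular real matrix `W ∈ ℝ^{d×d'}`, i.e. the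
`min{d,d'}`-th largest singular value: the square root of the smallest eigenvalue of the smaller
of the two Gram matrices `W Wᵀ`, `Wᵀ W`. -/
noncomputable def sigmaMin {d d' : ℕ} (W : Matrix (Fin d) (Fin d') ℝ) : ℝ :=
  if d ≤ d' then
    Real.sqrt (⨅ i : Fin d, (Matrix.posSemidef_self_mul_conjTranspose W).1.eigenvalues i)
  else
    Real.sqrt (⨅ i : Fin d', (Matrix.posSemidef_conjTranspose_mul_self W).1.eigenvalues i)

noncomputable section

def en {k : ℕ} (v : Fin k → ℝ) : ℝ := ‖(WithLp.equiv 2 (Fin k → ℝ)).symm v‖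

lemma en_nonneg {k : ℕ} (v : Fin k → ℝ) : 0 ≤ en v := norm_nonneg _

lemma en_eq {k : ℕ} (v : Fin k → ℝ) : en v = Real.sqrt (∑ i, v i ^ 2) := by
  rw [en, EuclideanSpace.norm_eq]
  congr 1
  simp [sq_abs]

lemma en_sq {k : ℕ} (v : Fin k → ℝ) : en v ^ 2 = ∑ i, v i ^ 2 := by
  rw [en_eq, Real.sq_sqrt (Finset.sum_nonneg fun i _ => sq_nonneg _)]

lemma dot_self_eq {k : ℕ} (v : Fin k → ℝ) : v ⬝ᵥ v = en v ^ 2 := by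
  rw [en_sq]; simp [dotProduct, sq]

lemma en_add_le {k : ℕ} (u v : Fin k → ℝ) : en (u + v) ≤ en u + en v := by
  have := norm_add_le ((WithLp.equiv 2 (Fin k → ℝ)).symm u) ((WithLp.equiv 2 (Fin k → ℝ)).symm v)
  simpa [en] using this


open scoped RealInnerProductSpace in
lemma rayleigh_inner {n : ℕ} {H : Matrix (Fin n) (Fin n) ℝ} (hH : H.IsHermitian)
    (x : EuclideanSpace ℝ (Fin n)) :
    (⨅ i, hH.eigenvalues i) * ⟪x, x⟫ ≤ ⟪x, Matrix.toEuclideanLin H x⟫ := by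
  set b := hH.eigenvectorBasis with hb
  set c : Fin n → ℝ := fun i => ⟪b i, x⟫ with hc
  have hTb : ∀ j, Matrix.toEuclideanLin H (b j) = hH.eigenvalues j • b j := by
    intro j
    have h1 := hH.mulVec_eigenvectorBasis j
    rw [Matrix.toEuclideanLin_apply, hb, h1, WithLp.toLp_smul, WithLp.toLp_ofLp]
  have hx : ∑ i, c i • b i = x := by
    simpa [hc] using b.sum_repr' x
  have hTx : Matrix.toEuclideanLin H x = ∑ i, (c i * hH.eigenvalues i) • b i := by
    rw [← hx, map_sum]
    refine Finset.sum_congr rfl fun i _ => ?_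
    rw [_root_.map_smul, hTb i, smul_smul]
  have hci : ∀ i, ⟪b i, x⟫ = c i := fun i => rfl
  have hinner : ⟪x, Matrix.toEuclideanLin H x⟫ = ∑ i, hH.eigenvalues i * c i ^ 2 := by
    rw [hTx, inner_sum]
    refine Finset.sum_congr rfl fun i _ => ?_
    rw [real_inner_smul_right, real_inner_comm, hci]
    ring
  have hxx : ⟪x, x⟫ = ∑ i, c i ^ 2 := by
    have h2 : ⟪x, x⟫ = ⟪x, ∑ i, c i • b i⟫ := by rw [hx]
    rw [h2, inner_sum]
    refine Finset.sum_congr rfl fun i _ => ?_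
    rw [real_inner_smul_right, real_inner_comm, hci, sq]
  rw [hinner, hxx, Finset.mul_sum]
  refine Finset.sum_le_sum fun i _ => ?_
  have h1 : (⨅ j, hH.eigenvalues j) ≤ hH.eigenvalues i :=
    ciInf_le (Set.Finite.bddBelow (Set.finite_range _)) i
  exact mul_le_mul_of_nonneg_right h1 (sq_nonneg _)

lemma rayleigh_dot {n : ℕ} {H : Matrix (Fin n) (Fin n) ℝ} (hH : H.IsHermitian)
    (x : Fin n → ℝ) :
    (⨅ i, hH.eigenvalues i) * (x ⬝ᵥ x) ≤ x ⬝ᵥ (H *ᵥ x) := by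
  have h := rayleigh_inner hH ((WithLp.equiv 2 (Fin n → ℝ)).symm x)
  simp only [WithLp.equiv_symm_apply, EuclideanSpace.inner_eq_star_dotProduct, star_trivial,
    Matrix.toEuclideanLin_apply, WithLp.ofLp_toLp] at h
  rw [dotProduct_comm x (H *ᵥ x)]; exact h

open scoped RealInnerProductSpace in
lemma exists_eigen_min {n : ℕ} (hn : 0 < n) {H : Matrix (Fin n) (Fin n) ℝ}
    (hH : H.IsHermitian) :
    ∃ x : Fin n → ℝ, x ⬝ᵥ x = 1 ∧ x ⬝ᵥ (H *ᵥ x) = ⨅ i, hH.eigenvalues i := by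
  have : Nonempty (Fin n) := ⟨⟨0, hn⟩⟩
  obtain ⟨i₀, hi₀⟩ := Finite.exists_min hH.eigenvalues
  have hmin : (⨅ i, hH.eigenvalues i) = hH.eigenvalues i₀ :=
    le_antisymm (ciInf_le (Set.Finite.bddBelow (Set.finite_range _)) i₀) (le_ciInf hi₀)
  refine ⟨⇑(hH.eigenvectorBasis i₀), ?_, ?_⟩
  · have h1 : ‖hH.eigenvectorBasis i₀‖ = 1 := hH.eigenvectorBasis.orthonormal.1 i₀
    have h2 : ⟪hH.eigenvectorBasis i₀, hH.eigenvectorBasis i₀⟫ = 1 := by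
      rw [real_inner_self_eq_norm_sq, h1]; norm_num
    rw [EuclideanSpace.inner_eq_star_dotProduct, star_trivial] at h2; exact h2
  · rw [hH.mulVec_eigenvectorBasis i₀, hmin]
    have h1 : ‖hH.eigenvectorBasis i₀‖ = 1 := hH.eigenvectorBasis.orthonormal.1 i₀
    have h2 : ⟪hH.eigenvectorBasis i₀, hH.eigenvectorBasis i₀⟫ = 1 := by
      rw [real_inner_self_eq_norm_sq, h1]; norm_num
    have h3 : (⇑(hH.eigenvectorBasis i₀) : Fin n → ℝ) ⬝ᵥ ⇑(hH.eigenvectorBasis i₀) = 1 := by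
      rw [EuclideanSpace.inner_eq_star_dotProduct, star_trivial] at h2; exact h2
    rw [dotProduct_smul, h3]
    simp

lemma gram_dot {m n : ℕ} (A : Matrix (Fin m) (Fin n) ℝ) (x : Fin n → ℝ) :
    x ⬝ᵥ ((Aᴴ * A) *ᵥ x) = (A *ᵥ x) ⬝ᵥ (A *ᵥ x) := by
  rw [← Matrix.mulVec_mulVec, Matrix.dotProduct_mulVec,
    Matrix.conjTranspose_eq_transpose_of_trivial, Matrix.vecMul_transpose]

/-- min singular value via `Aᴴ * A` (the `n`-side Gram matrix). -/
def smin {m n : ℕ} (A : Matrix (Fin m) (Fin n) ℝ) : ℝ :=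
  Real.sqrt (⨅ i : Fin n, (Matrix.posSemidef_conjTranspose_mul_self A).1.eigenvalues i)

lemma smin_nonneg {m n : ℕ} (A : Matrix (Fin m) (Fin n) ℝ) : 0 ≤ smin A := Real.sqrt_nonneg _

lemma en_eq_one {k : ℕ} {x : Fin k → ℝ} (hx : x ⬝ᵥ x = 1) : en x = 1 := by
  have h := dot_self_eq x
  rw [hx] at h
  have := en_nonneg x
  nlinarith

lemma smin_le_en {m n : ℕ} (A : Matrix (Fin m) (Fin n) ℝ) {x : Fin n → ℝ}
    (hx : x ⬝ᵥ x = 1) : smin A ≤ en (A *ᵥ x) := by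
  have h := rayleigh_dot (Matrix.posSemidef_conjTranspose_mul_self A).1 x
  rw [hx, mul_one, gram_dot, dot_self_eq] at h
  calc smin A ≤ Real.sqrt (en (A *ᵥ x) ^ 2) := Real.sqrt_le_sqrt h
    _ = en (A *ᵥ x) := Real.sqrt_sq (en_nonneg _)

lemma exists_smin {m n : ℕ} (hn : 0 < n) (A : Matrix (Fin m) (Fin n) ℝ) :
    ∃ x : Fin n → ℝ, x ⬝ᵥ x = 1 ∧ en (A *ᵥ x) = smin A := by
  obtain ⟨x, hx1, hx2⟩ := exists_eigen_min hn (Matrix.posSemidef_conjTranspose_mul_self A).1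
  rw [gram_dot, dot_self_eq] at hx2
  exact ⟨x, hx1, by rw [smin, ← hx2, Real.sqrt_sq (en_nonneg _)]⟩

lemma frobNorm_nonneg {p q : ℕ} (M : Matrix (Fin p) (Fin q) ℝ) : 0 ≤ frobNorm M :=
  Real.sqrt_nonneg _

lemma frobNorm_sq {p q : ℕ} (M : Matrix (Fin p) (Fin q) ℝ) :
    frobNorm M ^ 2 = ∑ i, ∑ j, (M i j) ^ 2 := by
  rw [frobNorm, Real.sq_sqrt]
  exact Finset.sum_nonneg fun i _ => Finset.sum_nonneg fun j _ => sq_nonneg _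

lemma frobNorm_sub_comm {p q : ℕ} (A B : Matrix (Fin p) (Fin q) ℝ) :
    frobNorm (A - B) = frobNorm (B - A) := by
  unfold frobNorm
  congr 1
  refine Finset.sum_congr rfl fun i _ => Finset.sum_congr rfl fun j _ => ?_
  simp [Matrix.sub_apply]
  ring

lemma frobNorm_transpose {p q : ℕ} (M : Matrix (Fin p) (Fin q) ℝ) :
    frobNorm Mᵀ = frobNorm M := by
  unfold frobNorm
  rw [Finset.sum_comm]
  rfl

lemma en_mulVec_le {p q : ℕ} (M : Matrix (Fin p) (Fin q) ℝ) (x : Fin q → ℝ) :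
    en (M *ᵥ x) ≤ frobNorm M * en x := by
  have h1 : en (M *ᵥ x) ^ 2 ≤ (frobNorm M * en x) ^ 2 := by
    rw [en_sq, mul_pow, frobNorm_sq, en_sq, Finset.sum_mul]
    refine Finset.sum_le_sum fun i _ => ?_
    calc (M *ᵥ x) i ^ 2 = (∑ j, M i j * x j) ^ 2 := by rfl
      _ ≤ (∑ j, M i j ^ 2) * ∑ j, x j ^ 2 :=
        Finset.sum_mul_sq_le_sq_mul_sq Finset.univ (fun j => M i j) x
  have h2 : 0 ≤ frobNorm M * en x := mul_nonneg (frobNorm_nonneg _) (en_nonneg _)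
  nlinarith [en_nonneg (M *ᵥ x)]

lemma smin_perturb {m n : ℕ} (hn : 0 < n) (Λ W' : Matrix (Fin m) (Fin n) ℝ) :
    smin Λ ≤ smin W' + frobNorm (W' - Λ) := by
  obtain ⟨x, hx1, hx2⟩ := exists_smin hn W'
  have hen1 : en x = 1 := en_eq_one hx1
  have hsplit : Λ *ᵥ x = W' *ᵥ x + (Λ - W') *ᵥ x := by
    rw [Matrix.sub_mulVec]
    abel
  calc smin Λ ≤ en (Λ *ᵥ x) := smin_le_en Λ hx1
    _ ≤ en (W' *ᵥ x) + en ((Λ - W') *ᵥ x) := by rw [hsplit]; exact en_add_le _ _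
    _ ≤ smin W' + frobNorm (Λ - W') * en x := by
        gcongr
        · exact le_of_eq hx2
        · exact en_mulVec_le _ _
    _ = smin W' + frobNorm (W' - Λ) := by rw [hen1, mul_one, frobNorm_sub_comm]

lemma smin_construct {m n : ℕ} (hn : 0 < n) (Λ : Matrix (Fin m) (Fin n) ℝ)
    {δ : ℝ} (hδ : 0 < δ) (hδσ : δ ≤ smin Λ) :
    ∃ W' : Matrix (Fin m) (Fin n) ℝ, smin W' ≤ δ ∧ frobNorm (W' - Λ) = smin Λ - δ := by
  obtain ⟨x, hx1, hx2⟩ := exists_smin hn Λ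
  set σ := smin Λ with hσ
  have hσ0 : 0 < σ := lt_of_lt_of_le hδ hδσ
  set u := Λ *ᵥ x with hu
  set s := 1 - δ / σ with hs
  have hs0 : 0 ≤ s := by
    rw [hs]
    have : δ / σ ≤ 1 := (div_le_one hσ0).mpr hδσ
    linarith
  refine ⟨Λ - s • Matrix.vecMulVec u x, ?_, ?_⟩
  · have hmv : (Λ - s • Matrix.vecMulVec u x) *ᵥ x = (δ / σ) • u := by
      rw [Matrix.sub_mulVec, Matrix.smul_mulVec]
      have hxx : ∑ j, x j * x j = 1 := hx1
      have h1 : Matrix.vecMulVec u x *ᵥ x = u := by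
        ext i
        simp only [Matrix.mulVec, Matrix.vecMulVec_apply, dotProduct, mul_assoc,
          ← Finset.mul_sum, hxx, mul_one]
      rw [h1]
      ext i
      simp only [Pi.sub_apply, Pi.smul_apply, smul_eq_mul]
      rw [hs]
      ring
    have h2 : en ((δ / σ) • u) = δ := by
      have h3 : en ((δ / σ) • u) = |δ / σ| * en u := by
        unfold en
        rw [show (WithLp.equiv 2 (Fin m → ℝ)).symm ((δ / σ) • u)
            = (δ / σ) • (WithLp.equiv 2 (Fin m → ℝ)).symm u from rfl, norm_smul]
        rw [Real.norm_eq_abs]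
      rw [h3, hx2, abs_of_pos (div_pos hδ hσ0), div_mul_cancel₀ _ (ne_of_gt hσ0)]
    calc smin _ ≤ en ((Λ - s • Matrix.vecMulVec u x) *ᵥ x) := smin_le_en _ hx1
      _ = δ := by rw [hmv, h2]
  · have hdiff : Λ - s • Matrix.vecMulVec u x - Λ = -(s • Matrix.vecMulVec u x) := by abel
    rw [hdiff]
    have hsum : ∑ i, ∑ j, (-(s • Matrix.vecMulVec u x)) i j ^ 2 = s ^ 2 * σ ^ 2 := by
      have hterm : ∀ i j, (-(s • Matrix.vecMulVec u x)) i j ^ 2 = s ^ 2 * (u i ^ 2 * x j ^ 2) := by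
        intro i j
        simp [Matrix.vecMulVec_apply]
        ring
      have e1 : ∑ j, x j ^ 2 = 1 := by
        rw [← en_sq, en_eq_one hx1]; norm_num
      have e2 : ∑ i, u i ^ 2 = σ ^ 2 := by rw [← en_sq, hx2]
      calc ∑ i, ∑ j, (-(s • Matrix.vecMulVec u x)) i j ^ 2
          = ∑ i, ∑ j, s ^ 2 * (u i ^ 2 * x j ^ 2) := by simp_rw [hterm]
        _ = s ^ 2 * ∑ i, ∑ j, u i ^ 2 * x j ^ 2 := by
            rw [Finset.mul_sum]
            exact Finset.sum_congr rfl fun i _ => by rw [Finset.mul_sum]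
        _ = s ^ 2 * ((∑ i, u i ^ 2) * (∑ j, x j ^ 2)) := by rw [← Finset.sum_mul_sum]
        _ = s ^ 2 * σ ^ 2 := by rw [e1, e2, mul_one]
    rw [frobNorm, hsum]
    rw [show s ^ 2 * σ ^ 2 = (s * σ) ^ 2 by ring, Real.sqrt_sq (mul_nonneg hs0 (le_of_lt hσ0))]
    rw [hs]
    field_simp

lemma frobNorm_self_sub {p q : ℕ} (A : Matrix (Fin p) (Fin q) ℝ) : frobNorm (A - A) = 0 := by
  simp [frobNorm]

lemma core_iff {m n : ℕ} (hn : 0 < n) (Λ W : Matrix (Fin m) (Fin n) ℝ) {δ : ℝ} (hδ : 0 < δ) :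
    (∀ W' : Matrix (Fin m) (Fin n) ℝ, smin W' ≤ δ →
        frobNorm (W - Λ) < frobNorm (W' - Λ)) ↔
      frobNorm (W - Λ) < smin Λ - δ := by
  constructor
  · intro h
    by_cases hcase : δ ≤ smin Λ
    · obtain ⟨W', h1, h2⟩ := smin_construct hn Λ hδ hcase
      rw [← h2]
      exact h W' h1
    · push_neg at hcase
      have := h Λ (le_of_lt hcase)
      rw [frobNorm_self_sub] at this
      exact absurd this (not_lt.mpr (frobNorm_nonneg _))
  · intro h W' hW'
    have hp := smin_perturb hn Λ W'
    linarith

lemma eig_congr {k : ℕ} {A B : Matrix (Fin k) (Fin k) ℝ} (hA : A.IsHermitian)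
    (hB : B.IsHermitian) (h : A = B) : hA.eigenvalues = hB.eigenvalues := by
  subst h; rfl


lemma sigmaMin_eq_pos {d d' : ℕ} (h : d ≤ d') (W : Matrix (Fin d) (Fin d') ℝ) :
    sigmaMin W = smin Wᵀ := by
  rw [sigmaMin, if_pos h, smin]
  congr 2

lemma sigmaMin_eq_neg {d d' : ℕ} (h : ¬ d ≤ d') (W : Matrix (Fin d) (Fin d') ℝ) :
    sigmaMin W = smin W := by
  rw [sigmaMin, if_neg h, smin]

end

/-- For the loss `ℓ(W) = ½‖W − Λ‖_F² + c`, a matrix `W` has deficiency margin `δ > 0`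
(i.e. `ℓ(W) < ℓ(W')` whenever `σ_min(W') ≤ δ`) if and only if `‖W − Λ‖_F < σ_min(Λ) − δ`. -/
theorem deficiency_margin_iff {d₀ dₙ : ℕ} (hd₀ : 0 < d₀) (hdₙ : 0 < dₙ)
    (Λ : Matrix (Fin dₙ) (Fin d₀) ℝ) (c : ℝ) (δ : ℝ) (hδ : 0 < δ)
    (W : Matrix (Fin dₙ) (Fin d₀) ℝ) :
    (∀ W' : Matrix (Fin dₙ) (Fin d₀) ℝ, sigmaMin W' ≤ δ →
        (1 / 2) * frobNorm (W - Λ) ^ 2 + c < (1 / 2) * frobNorm (W' - Λ) ^ 2 + c)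
      ↔ frobNorm (W - Λ) < sigmaMin Λ - δ := by
  have key : ∀ A B : Matrix (Fin dₙ) (Fin d₀) ℝ,
      ((1 : ℝ) / 2 * frobNorm A ^ 2 + c < 1 / 2 * frobNorm B ^ 2 + c ↔
        frobNorm A < frobNorm B) := by
    intro A B
    constructor
    · intro h; nlinarith [frobNorm_nonneg A, frobNorm_nonneg B]
    · intro h; nlinarith [frobNorm_nonneg A, frobNorm_nonneg B]
  have hfr : ∀ X Y : Matrix (Fin dₙ) (Fin d₀) ℝ, frobNorm (X - Y) = frobNorm (Xᵀ - Yᵀ) := by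
    intro X Y
    rw [← Matrix.transpose_sub, frobNorm_transpose]
  by_cases hcase : dₙ ≤ d₀
  · have hcore := core_iff hdₙ Λᵀ Wᵀ hδ
    constructor
    · intro h
      rw [hfr W Λ, sigmaMin_eq_pos hcase]
      apply hcore.mp
      intro V hV
      have hV' : sigmaMin Vᵀ ≤ δ := by
        rw [sigmaMin_eq_pos hcase, Matrix.transpose_transpose]; exact hV
      have h2 := (key _ _).mp (h Vᵀ hV')
      rw [hfr W Λ, hfr Vᵀ Λ, Matrix.transpose_transpose] at h2
      exact h2
    · intro h W' hW'
      apply (key _ _).mpr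
      rw [hfr W Λ, hfr W' Λ]
      rw [hfr W Λ, sigmaMin_eq_pos hcase] at h
      rw [sigmaMin_eq_pos hcase] at hW'
      exact hcore.mpr h W'ᵀ hW'
  · have hcore := core_iff hd₀ Λ W hδ
    constructor
    · intro h
      rw [sigmaMin_eq_neg hcase]
      apply hcore.mp
      intro V hV
      exact (key _ _).mp (h V (by rw [sigmaMin_eq_neg hcase]; exact hV))
    · intro h W' hW'
      apply (key _ _).mpr
      rw [sigmaMin_eq_neg hcase] at h hW'
      exact hcore.mpr h W' hW'
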